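/- Let e be an idempotent in a ring R. If R is purely infinite then the corner eRe is purely infinite, and if R is properly purely infinite then eRe is properly purely infinite. -/

import Mathlib

/-- `x ≼ y` for square matrices over a (possibly nonunital) ring: `x = α * y * β`
for some rectangular matrices `α`, `β`. -/
def MatSub {R : Type*} [NonUnitalRing R] {k n : ℕ}
    (x : Matrix (Fin k) (Fin k) R) (y : Matrix (Fin n) (Fin n) R) : Prop :=
  ∃ (α : Matrix (Fin k) (Fin n) R) (β : Matrix (Fin n) (Fin k) R), x = α * y * β

/-- `a ⊕ b ≼ c` for ring elements: the block-diagonal matrix `diag(a, b)` satisfies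
`diag(a,b) ≼ (c)` as square matrices. -/
def PairSub {R : Type*} [NonUnitalRing R] (a b c : R) : Prop :=
  MatSub !![a, 0; 0, b] !![c]

/-- `a ≼ b` for ring elements: `a = α * b * β` for some ring elements. -/
def ElemSub {R : Type*} [NonUnitalRing R] (a b : R) : Prop :=
  ∃ α β : R, a = α * b * β

/-- `K(a) = { x | a ⊕ x ≼ a }`. -/
def KSet {R : Type*} [NonUnitalRing R] (a : R) : Set R := { x | PairSub a x a }

/-- An element `a` is infinite if `a ⊕ x ≼ a` for some nonzero `x`, i.e. `K(a) ≠ 0`. -/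
def IsInfiniteElem {R : Type*} [NonUnitalRing R] (a : R) : Prop :=
  ∃ x : R, x ≠ 0 ∧ PairSub a x a

/-- An element `a` is properly infinite if `a ≠ 0` and `a ⊕ a ≼ a`. -/
def IsProperlyInfiniteElem {R : Type*} [NonUnitalRing R] (a : R) : Prop :=
  a ≠ 0 ∧ PairSub a a a

/-- A ring is s-unital if each element `x` admits `u, v` with `u * x = x` and `x * v = x`. -/
def IsSUnitalRing (R : Type*) [NonUnitalRing R] : Prop :=
  ∀ x : R, (∃ u : R, u * x = x) ∧ (∃ v : R, x * v = x)

/-- `b` belongs to `RaR`, the set of finite sums `Σ xᵢ * a * yᵢ`. -/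
def MemRaR {R : Type*} [NonUnitalRing R] (a b : R) : Prop :=
  ∃ (n : ℕ) (x y : Fin n → R), b = ∑ i, x i * a * y i

/-- A (possibly nonunital) ring is a division ring: it has a nonzero multiplicative identity
with respect to which every nonzero element is two-sided invertible. -/
def IsDivisionRingPred (R : Type*) [NonUnitalRing R] : Prop :=
  ∃ u : R, u ≠ 0 ∧ (∀ x : R, u * x = x ∧ x * u = x) ∧
    ∀ x : R, x ≠ 0 → ∃ y : R, x * y = u ∧ y * x = u

/-- A ring `R` is purely infinite if no quotient of `R` by a two-sided ideal is a division
ring, and `b ∈ RaR` implies `b = x * a * y` for some `x, y ∈ R`. -/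
def IsPurelyInfiniteRing (R : Type*) [NonUnitalRing R] : Prop :=
  (∀ I : TwoSidedIdeal R, ¬ IsDivisionRingPred I.ringCon.Quotient) ∧
  ∀ a b : R, MemRaR a b → ElemSub b a

/-- A ring is properly purely infinite if every nonzero element is properly infinite. -/
def IsProperlyPurelyInfiniteRing (R : Type*) [NonUnitalRing R] : Prop :=
  ∀ a : R, a ≠ 0 → IsProperlyInfiniteElem a

/-- An idempotent `e` is infinite if `e ∼ f ≤ e` for some idempotent `f ≠ e`. -/
def IsInfiniteIdem {R : Type*} [NonUnitalRing R] (e : R) : Prop :=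
  IsIdempotentElem e ∧ ∃ f : R, IsIdempotentElem f ∧ (∃ x y : R, e = x * y ∧ f = y * x) ∧
    e * f = f ∧ f * e = f ∧ f ≠ e

/-- An exchange ring: for each `x` there are an idempotent `e` and elements `r, s` with
`e = x * r = x + s - x * s`. -/
def IsExchangeRing (R : Type*) [NonUnitalRing R] : Prop :=
  ∀ x : R, ∃ e r s : R, IsIdempotentElem e ∧ e = x * r ∧ e = x + s - x * s

/-- A ring has local units if every finite subset is contained in a corner `eRe`
for some idempotent `e`. -/
def HasLocalUnits (R : Type*) [NonUnitalRing R] : Prop :=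
  ∀ s : Finset R, ∃ e : R, IsIdempotentElem e ∧ ∀ x ∈ s, ∃ r : R, x = e * r * e

/-- For an idempotent `e` in a ring `R`, the corner `eRe` viewed as a nonunital subring;
it consists of those `x` with `e * x = x = x * e`, which for idempotent `e` coincides
with `{ e * r * e : r ∈ R }`. -/
def cornerSubring {R : Type*} [NonUnitalRing R] (e : R) : NonUnitalSubring R where
  carrier := { x : R | e * x = x ∧ x * e = x }
  zero_mem' := by simp
  add_mem' := by
    rintro a b ⟨ha1, ha2⟩ ⟨hb1, hb2⟩
    exact ⟨by rw [mul_add, ha1, hb1], by rw [add_mul, ha2, hb2]⟩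
  neg_mem' := by
    rintro a ⟨ha1, ha2⟩
    exact ⟨by rw [mul_neg, ha1], by rw [neg_mul, ha2]⟩
  mul_mem' := by
    rintro a b ⟨ha1, ha2⟩ ⟨hb1, hb2⟩
    exact ⟨by rw [← mul_assoc, ha1], by rw [mul_assoc, hb2]⟩


section Main

variable {R : Type*} [NonUnitalRing R]

lemma prod_entry {S : Type*} [NonUnitalRing S] (α : Matrix (Fin 2) (Fin 1) S) (c : S)
    (β : Matrix (Fin 1) (Fin 2) S) (i j : Fin 2) :
    (α * !![c] * β) i j = α i 0 * c * β 0 j := by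
  simp [Matrix.mul_apply, Fin.sum_univ_one]

end Main

section AuxRaR

variable {R : Type*} [NonUnitalRing R]

lemma mulc {a b c : R} (h : a * b = c) (X : R) : a * (b * X) = c * X := by
  rw [← mul_assoc, h]

lemma mulc2 {a b c d : R} (h : a * (b * c) = d) (X : R) : a * (b * (c * X)) = d * X := by
  rw [← mul_assoc b c X, ← mul_assoc a (b * c) X, h]

lemma memRaR_zero (a : R) : MemRaR a 0 :=
  ⟨0, ![], ![], by simp⟩

lemma memRaR_single (a s t : R) : MemRaR a (s * a * t) :=
  ⟨1, ![s], ![t], by simp⟩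

lemma memRaR_add {a b c : R} (hb : MemRaR a b) (hc : MemRaR a c) : MemRaR a (b + c) := by
  obtain ⟨n, x, y, rfl⟩ := hb
  obtain ⟨m, x', y', rfl⟩ := hc
  refine ⟨n + m, Fin.append x x', Fin.append y y', ?_⟩
  rw [Fin.sum_univ_add]
  simp [Fin.append_left, Fin.append_right]

lemma memRaR_neg {a b : R} (hb : MemRaR a b) : MemRaR a (-b) := by
  obtain ⟨n, x, y, rfl⟩ := hb
  exact ⟨n, fun i => -(x i), y, by simp⟩

lemma memRaR_mul_left {a b : R} (w : R) (hb : MemRaR a b) : MemRaR a (w * b) := by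
  obtain ⟨n, x, y, rfl⟩ := hb
  refine ⟨n, fun i => w * x i, y, ?_⟩
  rw [Finset.mul_sum]
  simp [mul_assoc]

/-- generators of the two-sided ideal generated by `z`. -/
def genSet (z : R) : Set R :=
  {w | (∃ s t, w = s * (z * t)) ∨ (∃ s, w = s * z) ∨ (∃ t, w = z * t) ∨ w = z}

abbrev idealCl (z : R) : AddSubgroup R := AddSubgroup.closure (genSet z)

lemma idealCl_self (z : R) : z ∈ idealCl z :=
  AddSubgroup.subset_closure (Or.inr (Or.inr (Or.inr rfl)))

lemma idealCl_mul_left (z s : R) {g : R} (hg : g ∈ idealCl z) : s * g ∈ idealCl z := by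
  induction hg using AddSubgroup.closure_induction with
  | mem w hw =>
    apply AddSubgroup.subset_closure
    obtain ⟨s', t', rfl⟩ | ⟨s', rfl⟩ | ⟨t', rfl⟩ | rfl := hw
    · exact Or.inl ⟨s * s', t', (mul_assoc s s' (z * t')).symm⟩
    · exact Or.inr (Or.inl ⟨s * s', (mul_assoc s s' z).symm⟩)
    · exact Or.inl ⟨s, t', rfl⟩
    · exact Or.inr (Or.inl ⟨s, rfl⟩)
  | zero => rw [mul_zero]; exact zero_mem _
  | add a b _ _ ha hb => rw [mul_add]; exact add_mem ha hb
  | neg a _ ha => rw [mul_neg]; exact neg_mem ha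

lemma idealCl_mul_right (z t : R) {g : R} (hg : g ∈ idealCl z) : g * t ∈ idealCl z := by
  induction hg using AddSubgroup.closure_induction with
  | mem w hw =>
    apply AddSubgroup.subset_closure
    obtain ⟨s', t', rfl⟩ | ⟨s', rfl⟩ | ⟨t', rfl⟩ | rfl := hw
    · exact Or.inl ⟨s', t' * t, by rw [mul_assoc, mul_assoc]⟩
    · exact Or.inl ⟨s', t, by rw [mul_assoc]⟩
    · exact Or.inr (Or.inr (Or.inl ⟨t' * t, by rw [mul_assoc]⟩))
    · exact Or.inr (Or.inr (Or.inl ⟨t, rfl⟩))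
  | zero => rw [zero_mul]; exact zero_mem _
  | add a b _ _ ha hb => rw [add_mul]; exact add_mem ha hb
  | neg a _ ha => rw [neg_mul]; exact neg_mem ha

lemma memRaR_sandwich (e z k : R) (hz : e * z = 0 ∨ z * e = 0) (hk : k ∈ idealCl z) :
    MemRaR z (e * k * e) := by
  induction hk using AddSubgroup.closure_induction with
  | mem w hw =>
    obtain ⟨s, t, rfl⟩ | ⟨s, rfl⟩ | ⟨t, rfl⟩ | hwz := hw
    · have h : e * (s * (z * t)) * e = (e * s) * z * (t * e) := by simp only [mul_assoc]
      rw [h]; exact memRaR_single ..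
    · have h : e * (s * z) * e = (e * s) * z * e := by simp only [mul_assoc]
      rw [h]; exact memRaR_single ..
    · rcases hz with hz | hz
      · have h : e * (z * t) * e = 0 := by
          rw [← mul_assoc e z t, hz, zero_mul, zero_mul]
        rw [h]; exact memRaR_zero z
      · have h : e * (z * t) * e = e * z * (t * e) := by simp only [mul_assoc]
        rw [h]; exact memRaR_single ..
    · rename_i hwz
      rw [hwz]
      rcases hz with hz | hz
      · rw [hz, zero_mul]; exact memRaR_zero z
      · rw [mul_assoc, hz, mul_zero]; exact memRaR_zero z
  | zero =>
    rw [mul_zero, zero_mul]; exact memRaR_zero z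
  | add a b _ _ ha hb =>
    have h : e * (a + b) * e = e * a * e + e * b * e := by rw [mul_add, add_mul]
    rw [h]; exact memRaR_add ha hb
  | neg a _ ha =>
    have h : e * (-a) * e = -(e * a * e) := by rw [mul_neg, neg_mul]
    rw [h]; exact memRaR_neg ha

end AuxRaR

section Key

lemma key_division {A : Type*} [NonUnitalRing A] (e : A) (he : e * e = e) (he0 : e ≠ 0)
    (h2 : ∀ a b : A, MemRaR a b → ElemSub b a)
    (hD : ∀ z : A, e * z * e ≠ 0 → ∃ w : A, e * w = w ∧ w * e = w ∧
      (e * z * e) * w = e ∧ w * (e * z * e) = e)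
    (hI : ∀ z : A, z ≠ 0 → ∃ k ∈ idealCl z, e * k * e ≠ 0) :
    IsDivisionRingPred A := by
  have He : ∀ X : A, e * (e * X) = e * X := mulc he
  -- Step O : any nonzero idempotent orthogonal to e leads to a contradiction
  have stepO : ∀ f : A, f * f = f → e * f = 0 → f * e = 0 → f = 0 := by
    intro f hf hef hfe
    by_contra hfne
    obtain ⟨k, hk, hd⟩ := hI f hfne
    obtain ⟨w, _, _, _, hwd⟩ := hD k hd
    have hmem : MemRaR f e := by
      rw [← hwd]
      exact memRaR_mul_left w (memRaR_sandwich e f k (Or.inl hef) hk)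
    obtain ⟨s, t, hst⟩ := h2 f e hmem
    -- e = s * f * t
    have Hf : ∀ X : A, f * (f * X) = f * X := mulc hf
    have Hef : ∀ X : A, e * (f * X) = 0 := fun X => by rw [← mul_assoc, hef, zero_mul]
    have Hst : ∀ X : A, s * (f * (t * X)) = e * X := fun X => by
      rw [hst]; simp only [mul_assoc]
    obtain ⟨q, hqdef⟩ : ∃ q : A, q = f * (t * (e * (s * f))) := ⟨_, rfl⟩
    have hqq : q * q = q := by
      rw [hqdef]; simp only [mul_assoc]
      simp only [Hf, Hst, He]
    have heq : e * q = 0 := by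
      rw [hqdef, Hef]
    have hqe : q * e = 0 := by
      rw [hqdef]; simp only [mul_assoc]; simp only [hfe, mul_zero]
    have hE : (e * (s * f)) * (q * (f * (t * e))) = e := by
      rw [hqdef]; simp only [mul_assoc]
      simp only [Hf, Hst, He, he]
    have hqne : q ≠ 0 := by
      intro h
      apply he0
      rw [← hE, h, zero_mul, mul_zero]
    have hmem2 : MemRaR e (e + q) := by
      refine ⟨2, ![e, f * (t * e)], ![e, s * f], ?_⟩
      rw [Fin.sum_univ_two]
      simp only [Matrix.cons_val_zero, Matrix.cons_val_one, Matrix.head_cons]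
      rw [hqdef]
      congr 1
      · rw [he, he]
      · simp only [mul_assoc]; simp only [He]
    obtain ⟨c, d2, hcd⟩ := h2 e (e + q) hmem2
    -- e + q = c * e * d2
    have hc1 : c * (e * (d2 * e)) = e := by
      have h1 : c * (e * (d2 * e)) = (c * e * d2) * e := by simp only [mul_assoc]
      rw [h1, ← hcd, add_mul, he, hqe, add_zero]
    have hc2 : c * (e * (d2 * q)) = q := by
      have h1 : c * (e * (d2 * q)) = (c * e * d2) * q := by simp only [mul_assoc]
      rw [h1, ← hcd, add_mul, heq, hqq, zero_add]
    have hGH : (e * (c * e)) * (e * (d2 * e)) = e := by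
      simp only [mul_assoc, He]
      rw [hc1, he]
    have hGR : (e * (c * e)) * (e * (d2 * q)) = 0 := by
      simp only [mul_assoc, He]
      rw [hc2, heq]
    have hLR : (q * (c * e)) * (e * (d2 * q)) = q := by
      simp only [mul_assoc, He]
      rw [hc2, hqq]
    have hGne : e * (c * e) ≠ 0 := fun h => he0 (by rw [← hGH, h, zero_mul])
    obtain ⟨w2, hew2, hw2e, hgw2, hw2g⟩ := hD c (by rw [mul_assoc]; exact hGne)
    simp only [mul_assoc] at hgw2 hw2g
    -- hw2g : w2 * (e * (c * e)) = e
    have h1 : w2 = e * (d2 * e) := by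
      conv_lhs => rw [← hw2e, ← hGH, ← mul_assoc, hw2g]
      rw [He]
    have hHG : (e * (d2 * e)) * (e * (c * e)) = e := by rw [← h1]; exact hw2g
    have hR0 : e * (d2 * q) = 0 := by
      have h3 : e * (e * (d2 * q)) = ((e * (d2 * e)) * (e * (c * e))) * (e * (d2 * q)) := by
        rw [hHG]
      rw [← He (d2 * q), h3, mul_assoc, hGR, mul_zero]
    exact hqne (by rw [← hLR, hR0, mul_zero])
  -- Step L : e is a left identity
  have stepL : ∀ r : A, e * r = r := by
    intro r
    by_contra h0
    obtain ⟨x, hxdef⟩ : ∃ x : A, x = r - e * r := ⟨_, rfl⟩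
    have hxne : x ≠ 0 := by
      rw [hxdef, sub_ne_zero]
      exact fun h => h0 h.symm
    have hx : e * x = 0 := by rw [hxdef, mul_sub, ← mul_assoc, he, sub_self]
    obtain ⟨k, hk, hd⟩ := hI x hxne
    obtain ⟨w, _, _, _, hwd⟩ := hD k hd
    have hmem : MemRaR x e := by
      rw [← hwd]
      exact memRaR_mul_left w (memRaR_sandwich e x k (Or.inl hx) hk)
    obtain ⟨u0, v0, hst⟩ := h2 x e hmem
    obtain ⟨u, hu⟩ : ∃ u : A, u = e * u0 := ⟨_, rfl⟩
    obtain ⟨v, hv⟩ : ∃ v : A, v = v0 * e := ⟨_, rfl⟩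
    have Hx : ∀ X : A, e * (x * X) = 0 := fun X => by rw [← mul_assoc, hx, zero_mul]
    have huxv : u * (x * v) = e := by
      rw [hu, hv]
      have hh : (e * u0) * (x * (v0 * e)) = e * ((u0 * x * v0) * e) := by simp only [mul_assoc]
      rw [hh, ← hst, he, he]
    have HU : ∀ X : A, u * (x * (v * X)) = e * X := mulc2 huxv
    have Hu : e * u = u := by rw [hu, ← mul_assoc, he]
    have Hv : v * e = v := by rw [hv, mul_assoc, he]
    obtain ⟨p, hp⟩ : ∃ p : A, p = x * (v * u) := ⟨_, rfl⟩
    have hpp : p * p = p := by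
      rw [hp]; simp only [mul_assoc]
      rw [HU, Hu]
    have hep : e * p = 0 := by rw [hp, ← mul_assoc, hx, zero_mul]
    obtain ⟨f, hfdef⟩ : ∃ f : A, f = p - p * e := ⟨_, rfl⟩
    have hef2 : e * f = 0 := by
      rw [hfdef, mul_sub, hep, ← mul_assoc, hep, zero_mul, sub_zero]
    have hfe2 : f * e = 0 := by
      rw [hfdef, sub_mul, mul_assoc, he, sub_self]
    have hff : f * f = f := by
      have h1 : p * f = f := by rw [hfdef, mul_sub, hpp, ← mul_assoc, hpp]
      have h2' : (p * e) * f = 0 := by rw [mul_assoc, hef2, mul_zero]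
      calc f * f = (p - p * e) * f := by rw [hfdef]
        _ = p * f - (p * e) * f := sub_mul ..
        _ = f - 0 := by rw [h1, h2']
        _ = f := sub_zero f
    have hfne : f ≠ 0 := by
      intro hf0
      have hpe : p = p * e := by
        have := hfdef ▸ hf0
        rwa [sub_eq_zero] at this
      have hup : u * p = u := by rw [hp, HU, Hu]
      have hue : u * e = u := by
        calc u * e = (u * p) * e := by rw [hup]
          _ = u * (p * e) := mul_assoc ..
          _ = u * p := by rw [← hpe]
          _ = u := hup
      have hune : u ≠ 0 := fun h => he0 (by rw [← huxv, h, zero_mul])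
      have hval : e * u * e = u := by rw [Hu, hue]
      obtain ⟨w1, hew1, hw1e, huw1, hw1u⟩ := hD u (by rw [hval]; exact hune)
      rw [hval] at huw1 hw1u
      have hw10 : w1 = 0 := by
        have hh : w1 = e * (x * v) := by
          conv_lhs => rw [← hw1e, ← huxv, ← mul_assoc, hw1u]
        rw [hh, ← mul_assoc, hx, zero_mul]
      rw [hw10, mul_zero] at huw1
      exact he0 huw1.symm
    exact hfne (stepO f hff hef2 hfe2)
  -- Step R : e is a right identity
  have stepR : ∀ r : A, r * e = r := by
    intro r
    by_contra h0
    obtain ⟨x, hxdef⟩ : ∃ x : A, x = r - r * e := ⟨_, rfl⟩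
    have hxne : x ≠ 0 := by
      rw [hxdef, sub_ne_zero]
      exact fun h => h0 h.symm
    have hx : x * e = 0 := by rw [hxdef, sub_mul, mul_assoc, he, sub_self]
    obtain ⟨k, hk, hd⟩ := hI x hxne
    obtain ⟨w, _, _, _, hwd⟩ := hD k hd
    have hmem : MemRaR x e := by
      rw [← hwd]
      exact memRaR_mul_left w (memRaR_sandwich e x k (Or.inr hx) hk)
    obtain ⟨u0, v0, hst⟩ := h2 x e hmem
    obtain ⟨u, hu⟩ : ∃ u : A, u = e * u0 := ⟨_, rfl⟩
    obtain ⟨v, hv⟩ : ∃ v : A, v = v0 * e := ⟨_, rfl⟩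
    have huxv : u * (x * v) = e := by
      rw [hu, hv]
      have hh : (e * u0) * (x * (v0 * e)) = e * ((u0 * x * v0) * e) := by simp only [mul_assoc]
      rw [hh, ← hst, he, he]
    have HU : ∀ X : A, u * (x * (v * X)) = e * X := mulc2 huxv
    have Hu : e * u = u := by rw [hu, ← mul_assoc, he]
    have Hv : v * e = v := by rw [hv, mul_assoc, he]
    have HeU : ∀ X : A, e * (u * X) = u * X := mulc Hu
    obtain ⟨p, hp⟩ : ∃ p : A, p = v * (u * x) := ⟨_, rfl⟩
    have hpp : p * p = p := by
      rw [hp]; simp only [mul_assoc]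
      rw [HU, HeU]
    have hpe : p * e = 0 := by
      rw [hp]; simp only [mul_assoc]
      rw [hx, mul_zero, mul_zero]
    obtain ⟨f, hfdef⟩ : ∃ f : A, f = p - e * p := ⟨_, rfl⟩
    have hef2 : e * f = 0 := by
      rw [hfdef, mul_sub, ← mul_assoc, he, sub_self]
    have hfe2 : f * e = 0 := by
      rw [hfdef, sub_mul, hpe, mul_assoc, hpe, mul_zero, sub_zero]
    have hff : f * f = f := by
      have h1 : f * p = f := by rw [hfdef, sub_mul, hpp, mul_assoc, hpp]
      have h2' : f * (e * p) = 0 := by rw [← mul_assoc, hfe2, zero_mul]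
      calc f * f = f * (p - e * p) := by rw [hfdef]
        _ = f * p - f * (e * p) := mul_sub ..
        _ = f - 0 := by rw [h1, h2']
        _ = f := sub_zero f
    have hfne : f ≠ 0 := by
      intro hf0
      have hpe2 : p = e * p := by
        have := hfdef ▸ hf0
        rwa [sub_eq_zero] at this
      have hpv : p * v = v := by
        rw [hp]; simp only [mul_assoc]
        rw [huxv, Hv]
      have hev : e * v = v := by
        calc e * v = e * (p * v) := by rw [hpv]
          _ = (e * p) * v := (mul_assoc ..).symm
          _ = p * v := by rw [← hpe2]
          _ = v := hpv
      have hvne : v ≠ 0 := fun h => he0 (by rw [← huxv, h, mul_zero, mul_zero])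
      have hval : e * v * e = v := by rw [hev, Hv]
      obtain ⟨w1, hew1, hw1e, hvw1, hw1v⟩ := hD v (by rw [hval]; exact hvne)
      rw [hval] at hvw1 hw1v
      have hw10 : w1 = 0 := by
        have hh : w1 = u * (x * e) := by
          conv_lhs => rw [← hew1, ← huxv]
          simp only [mul_assoc]
          rw [hvw1]
        rw [hh, hx, mul_zero]
      rw [hw10, mul_zero] at hvw1
      exact he0 hvw1.symm
    exact hfne (stepO f hff hef2 hfe2)
  refine ⟨e, he0, fun r => ⟨stepL r, stepR r⟩, fun r hr => ?_⟩
  have hval : e * r * e = r := by rw [stepL r, stepR r]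
  obtain ⟨w, hew, hwe, hrw, hwr⟩ := hD r (by rw [hval]; exact hr)
  rw [hval] at hrw hwr
  exact ⟨w, hrw, hwr⟩

end Key

section Corner

variable {R : Type*} [NonUnitalRing R]

lemma mem_corner {e x : R} : x ∈ cornerSubring e ↔ e * x = x ∧ x * e = x := Iff.rfl

lemma corner_mem {e : R} (he : e * e = e) (r : R) : e * r * e ∈ cornerSubring e := by
  constructor
  · rw [← mul_assoc, ← mul_assoc, he]
  · rw [mul_assoc, mul_assoc, he, ← mul_assoc]

lemma quot_eq_zero_iff {S : Type*} [NonUnitalRing S] (I : TwoSidedIdeal S) (x : S) :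
    (x : I.ringCon.Quotient) = 0 ↔ x ∈ I := by
  rw [← RingCon.coe_zero, RingCon.eq]
  exact (I.mem_iff x).symm

lemma quot_surj {S : Type*} [NonUnitalRing S] (I : TwoSidedIdeal S)
    (q : I.ringCon.Quotient) : ∃ x : S, (x : I.ringCon.Quotient) = q :=
  Quot.exists_rep q

lemma quot_coe_sum {S : Type*} [NonUnitalRing S] (c : RingCon S) {n : ℕ} (f : Fin n → S) :
    ((∑ i, f i : S) : c.Quotient) = ∑ i, ((f i : S) : c.Quotient) := by
  classical
  induction (Finset.univ : Finset (Fin n)) using Finset.induction_on with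
  | empty => simp
  | insert _ _ hx ih => rename_i a s; rw [Finset.sum_insert hx, Finset.sum_insert hx, RingCon.coe_add, ih]

lemma quotient_pi2 {S : Type*} [NonUnitalRing S]
    (hPI2 : ∀ a b : S, MemRaR a b → ElemSub b a) (M : TwoSidedIdeal S) :
    ∀ a b : M.ringCon.Quotient, MemRaR a b → ElemSub b a := by
  intro a b hab
  obtain ⟨n, x, y, hb⟩ := hab
  obtain ⟨a0, rfl⟩ := quot_surj M a
  obtain ⟨b0, rfl⟩ := quot_surj M b
  choose x0 hx0 using fun i => quot_surj M (x i)
  choose y0 hy0 using fun i => quot_surj M (y i)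
  have hb' : ((b0 : S) : M.ringCon.Quotient) = ((∑ i, x0 i * a0 * y0 i : S) : M.ringCon.Quotient) := by
    rw [quot_coe_sum, hb]
    refine Finset.sum_congr rfl fun i _ => ?_
    rw [RingCon.coe_mul, RingCon.coe_mul, hx0, hy0]
  obtain ⟨X, Y, hXY⟩ := hPI2 a0 (∑ i, x0 i * a0 * y0 i) ⟨n, x0, y0, rfl⟩
  exact ⟨X, Y, by rw [hb', hXY, RingCon.coe_mul, RingCon.coe_mul]⟩

end Corner

section NoDiv

variable {R : Type*} [NonUnitalRing R]

lemma corner_no_div (e : R) (he : IsIdempotentElem e)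
    (hPI : IsPurelyInfiniteRing R) (J : TwoSidedIdeal (cornerSubring e)) :
    ¬ IsDivisionRingPred J.ringCon.Quotient := by
  intro hdiv
  obtain ⟨u, hu0, huid, huinv⟩ := hdiv
  have hee : e * e = e := he
  set eC : cornerSubring e := ⟨e, hee, hee⟩ with heC
  -- `eC` maps to the identity of the corner quotient
  have hid : ∀ q : J.ringCon.Quotient, (eC : J.ringCon.Quotient) * q = q ∧
      q * (eC : J.ringCon.Quotient) = q := by
    intro q
    obtain ⟨x, rfl⟩ := quot_surj J q
    constructor
    · rw [← RingCon.coe_mul]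
      exact congrArg (fun y : cornerSubring e => (y : J.ringCon.Quotient)) (Subtype.ext x.2.1)
    · rw [← RingCon.coe_mul]
      exact congrArg (fun y : cornerSubring e => (y : J.ringCon.Quotient)) (Subtype.ext x.2.2)
  have hu_eq : u = (eC : J.ringCon.Quotient) := ((hid u).2).symm.trans (huid _).1
  have heCJ : eC ∉ J := fun h => hu0 (by rw [hu_eq]; exact (quot_eq_zero_iff J eC).2 h)
  -- the image of `J` in `R`
  set Jv : Set R := Subtype.val '' (J : Set (cornerSubring e)) with hJv
  have hJv_zero : (0 : R) ∈ Jv := ⟨0, J.zero_mem, rfl⟩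
  have hJv_add : ∀ {a b : R}, a ∈ Jv → b ∈ Jv → a + b ∈ Jv := by
    rintro a b ⟨ja, hja, rfl⟩ ⟨jb, hjb, rfl⟩
    exact ⟨ja + jb, add_mem hja hjb, rfl⟩
  have hJv_neg : ∀ {a : R}, a ∈ Jv → -a ∈ Jv := by
    rintro a ⟨ja, hja, rfl⟩
    exact ⟨-ja, neg_mem hja, rfl⟩
  have hJv_lmul : ∀ (c : cornerSubring e) {a : R}, a ∈ Jv → (c : R) * a ∈ Jv := by
    rintro c a ⟨ja, hja, rfl⟩
    exact ⟨c * ja, J.mul_mem_left c ja hja, rfl⟩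
  have hJv_rmul : ∀ (c : cornerSubring e) {a : R}, a ∈ Jv → a * (c : R) ∈ Jv := by
    rintro c a ⟨ja, hja, rfl⟩
    exact ⟨ja * c, J.mul_mem_right ja c hja, rfl⟩
  -- the ideal P of R determined by J
  set Pc : R → Prop := fun r =>
    e * r * e ∈ Jv ∧ (∀ t, e * (r * t) * e ∈ Jv) ∧ (∀ s, e * (s * r) * e ∈ Jv) ∧
      (∀ s t, e * (s * (r * t)) * e ∈ Jv) with hPc
  have pf0 : Pc 0 := by
    refine ⟨?_, fun t => ?_, fun s => ?_, fun s t => ?_⟩ <;>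
      simp only [zero_mul, mul_zero] <;> exact hJv_zero
  have pfadd : ∀ {x y : R}, Pc x → Pc y → Pc (x + y) := by
    intro x y hx hy
    refine ⟨?_, fun t => ?_, fun s => ?_, fun s t => ?_⟩
    · have h : e * (x + y) * e = e * x * e + e * y * e := by rw [mul_add, add_mul]
      rw [h]; exact hJv_add hx.1 hy.1
    · have h : e * ((x + y) * t) * e = e * (x * t) * e + e * (y * t) * e := by
        rw [add_mul, mul_add, add_mul]
      rw [h]; exact hJv_add (hx.2.1 t) (hy.2.1 t)
    · have h : e * (s * (x + y)) * e = e * (s * x) * e + e * (s * y) * e := by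
        rw [mul_add, mul_add, add_mul]
      rw [h]; exact hJv_add (hx.2.2.1 s) (hy.2.2.1 s)
    · have h : e * (s * ((x + y) * t)) * e
          = e * (s * (x * t)) * e + e * (s * (y * t)) * e := by
        rw [add_mul, mul_add, mul_add, add_mul]
      rw [h]; exact hJv_add (hx.2.2.2 s t) (hy.2.2.2 s t)
  have pfneg : ∀ {x : R}, Pc x → Pc (-x) := by
    intro x hx
    refine ⟨?_, fun t => ?_, fun s => ?_, fun s t => ?_⟩
    · have h : e * (-x) * e = -(e * x * e) := by rw [mul_neg, neg_mul]
      rw [h]; exact hJv_neg hx.1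
    · have h : e * (-x * t) * e = -(e * (x * t) * e) := by rw [neg_mul, mul_neg, neg_mul]
      rw [h]; exact hJv_neg (hx.2.1 t)
    · have h : e * (s * -x) * e = -(e * (s * x) * e) := by rw [mul_neg, mul_neg, neg_mul]
      rw [h]; exact hJv_neg (hx.2.2.1 s)
    · have h : e * (s * (-x * t)) * e = -(e * (s * (x * t)) * e) := by
        rw [neg_mul, mul_neg, mul_neg, neg_mul]
      rw [h]; exact hJv_neg (hx.2.2.2 s t)
  have pfml : ∀ {x y : R}, Pc y → Pc (x * y) := by
    intro x y hy
    refine ⟨hy.2.2.1 x, fun t => ?_, fun s => ?_, fun s t => ?_⟩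
    · rw [mul_assoc x y t]; exact hy.2.2.2 x t
    · rw [← mul_assoc s x y]; exact hy.2.2.1 (s * x)
    · rw [mul_assoc x y t, ← mul_assoc s x (y * t)]; exact hy.2.2.2 (s * x) t
  have pfmr : ∀ {x y : R}, Pc x → Pc (x * y) := by
    intro x y hx
    refine ⟨hx.2.1 y, fun t => ?_, fun s => ?_, fun s t => ?_⟩
    · rw [mul_assoc x y t]; exact hx.2.1 (y * t)
    · exact hx.2.2.2 s y
    · rw [mul_assoc x y t]; exact hx.2.2.2 s (y * t)
  obtain ⟨P, hPmem⟩ : ∃ P : TwoSidedIdeal R, ∀ x, x ∈ P ↔ Pc x :=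
    ⟨TwoSidedIdeal.mk' (setOf Pc) pf0 (fun hx hy => pfadd hx hy) (fun hx => pfneg hx)
      (fun hy => pfml hy) (fun hx => pfmr hx), fun x => TwoSidedIdeal.mem_mk' ..⟩
  -- J sits inside P
  have hJP : ∀ v ∈ Jv, Pc v := by
    rintro v ⟨j, hj, rfl⟩
    obtain ⟨hv1, hv2⟩ : e * (j : R) = (j : R) ∧ (j : R) * e = (j : R) := j.2
    refine ⟨?_, fun t => ?_, fun s => ?_, fun s t => ?_⟩
    · rw [show e * (j : R) * e = (j : R) by rw [hv1, hv2]]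
      exact ⟨j, hj, rfl⟩
    · have h : e * ((j : R) * t) * e = (j : R) * (e * t * e) := by
        simp only [mul_assoc]; rw [mulc hv1, mulc hv2]
      rw [h]; exact hJv_rmul ⟨_, corner_mem hee t⟩ ⟨j, hj, rfl⟩
    · have h : e * (s * (j : R)) * e = (e * s * e) * (j : R) := by
        simp only [mul_assoc]; rw [hv2, hv1]
      rw [h]; exact hJv_lmul ⟨_, corner_mem hee s⟩ ⟨j, hj, rfl⟩
    · have h : e * (s * ((j : R) * t)) * e = ((e * s * e) * (j : R)) * (e * t * e) := by
        simp only [mul_assoc]; rw [mulc hv2, mulc hv1]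
      rw [h]
      exact hJv_rmul ⟨_, corner_mem hee t⟩ (hJv_lmul ⟨_, corner_mem hee s⟩ ⟨j, hj, rfl⟩)
  -- Zorn's lemma
  set S : Set (TwoSidedIdeal R) := {K | ∀ k ∈ K, e * k * e ∈ Jv} with hS
  have hPS : P ∈ S := fun k hk => ((hPmem k).1 hk).1
  have hchain : ∀ c ⊆ S, IsChain (· ≤ ·) c → ∀ y ∈ c, ∃ ub ∈ S, ∀ z ∈ c, z ≤ ub := by
    intro c hcS hcch y hyc
    obtain ⟨U, hUmem⟩ : ∃ U : TwoSidedIdeal R, ∀ x, x ∈ U ↔ x ∈ ⋃ K ∈ c, (K : Set R) := by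
      refine ⟨TwoSidedIdeal.mk' (⋃ K ∈ c, (K : Set R)) ?_ ?_ ?_ ?_ ?_,
        fun x => TwoSidedIdeal.mem_mk' ..⟩
      · exact Set.mem_biUnion hyc y.zero_mem
      · intro a b ha hb
        simp only [Set.mem_iUnion] at ha hb ⊢
        obtain ⟨K1, hK1, ha⟩ := ha
        obtain ⟨K2, hK2, hb⟩ := hb
        rcases hcch.total hK1 hK2 with h | h
        · exact ⟨K2, hK2, add_mem (h ha) hb⟩
        · exact ⟨K1, hK1, add_mem ha (h hb)⟩
      · intro a ha
        simp only [Set.mem_iUnion] at ha ⊢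
        obtain ⟨K, hK, ha⟩ := ha
        exact ⟨K, hK, neg_mem ha⟩
      · intro a b hb
        simp only [Set.mem_iUnion] at hb ⊢
        obtain ⟨K, hK, hb⟩ := hb
        exact ⟨K, hK, K.mul_mem_left _ _ hb⟩
      · intro a b ha
        simp only [Set.mem_iUnion] at ha ⊢
        obtain ⟨K, hK, ha⟩ := ha
        exact ⟨K, hK, K.mul_mem_right _ _ ha⟩
    refine ⟨U, ?_, ?_⟩
    · intro k hk
      rw [hUmem] at hk
      simp only [Set.mem_iUnion] at hk
      obtain ⟨K, hK, hk⟩ := hk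
      exact hcS hK k hk
    · intro z hz
      rw [TwoSidedIdeal.le_iff]
      intro w hw
      rw [SetLike.mem_coe, hUmem]
      exact Set.mem_biUnion hz hw
  obtain ⟨M, hPM, hMmax⟩ := zorn_le_nonempty₀ S hchain P hPS
  have hMS : ∀ k ∈ M, e * k * e ∈ Jv := hMmax.1
  have hJM : ∀ v ∈ Jv, v ∈ M := fun v hv =>
    TwoSidedIdeal.le_iff.mp hPM ((hPmem v).2 (hJP v hv))
  have heM : e ∉ M := by
    intro h
    have h1 : e * e * e ∈ Jv := hMS e h
    rw [hee, hee] at h1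
    obtain ⟨j, hj, hjv⟩ := h1
    have hje : eC = j := Subtype.ext hjv.symm
    exact heCJ (hje ▸ hj)
  -- pass to the quotient by M
  have heeA : ((e : R) : M.ringCon.Quotient) * ((e : R) : M.ringCon.Quotient)
      = ((e : R) : M.ringCon.Quotient) := by
    rw [← RingCon.coe_mul, hee]
  have hee0 : ((e : R) : M.ringCon.Quotient) ≠ 0 :=
    fun h => heM ((quot_eq_zero_iff M e).1 h)
  have hDA : ∀ z : M.ringCon.Quotient,
      ((e : R) : M.ringCon.Quotient) * z * ((e : R) : M.ringCon.Quotient) ≠ 0 →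
      ∃ w : M.ringCon.Quotient, ((e : R) : M.ringCon.Quotient) * w = w ∧
        w * ((e : R) : M.ringCon.Quotient) = w ∧
        (((e : R) : M.ringCon.Quotient) * z * ((e : R) : M.ringCon.Quotient)) * w
          = ((e : R) : M.ringCon.Quotient) ∧
        w * (((e : R) : M.ringCon.Quotient) * z * ((e : R) : M.ringCon.Quotient))
          = ((e : R) : M.ringCon.Quotient) := by
    intro z hz
    obtain ⟨z0, rfl⟩ := quot_surj M z
    have hcast : ((e * z0 * e : R) : M.ringCon.Quotient)
        = ((e : R) : M.ringCon.Quotient) * ((z0 : R) : M.ringCon.Quotient)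
          * ((e : R) : M.ringCon.Quotient) := by
      rw [RingCon.coe_mul, RingCon.coe_mul]
    have hz0M : e * z0 * e ∉ M := fun h => hz (by rw [← hcast]; exact (quot_eq_zero_iff M _).2 h)
    set zC : cornerSubring e := ⟨e * z0 * e, corner_mem hee z0⟩ with hzC
    have hz0J : zC ∉ J := fun h => hz0M (hJM _ ⟨_, h, rfl⟩)
    have hq0 : (zC : J.ringCon.Quotient) ≠ 0 := fun h => hz0J ((quot_eq_zero_iff J _).1 h)
    obtain ⟨yq, hy1, hy2⟩ := huinv _ hq0
    obtain ⟨wC, rfl⟩ := quot_surj J yq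
    rw [hu_eq, ← RingCon.coe_mul] at hy1 hy2
    have hm1 : zC * wC - eC ∈ J := (J.rel_iff _ _).1 ((RingCon.eq _).1 hy1)
    have hm2 : wC * zC - eC ∈ J := (J.rel_iff _ _).1 ((RingCon.eq _).1 hy2)
    have hv1 : (e * z0 * e) * (wC : R) - e ∈ M := hJM _ ⟨_, hm1, rfl⟩
    have hv2 : (wC : R) * (e * z0 * e) - e ∈ M := hJM _ ⟨_, hm2, rfl⟩
    refine ⟨((wC : R) : M.ringCon.Quotient), ?_, ?_, ?_, ?_⟩
    · rw [← RingCon.coe_mul]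
      exact congrArg (fun r : R => (r : M.ringCon.Quotient)) wC.2.1
    · rw [← RingCon.coe_mul]
      exact congrArg (fun r : R => (r : M.ringCon.Quotient)) wC.2.2
    · rw [← hcast, ← RingCon.coe_mul]
      have h0 : (((e * z0 * e) * (wC : R) - e : R) : M.ringCon.Quotient) = 0 :=
        (quot_eq_zero_iff M _).2 hv1
      rw [RingCon.coe_sub, sub_eq_zero] at h0
      exact h0
    · rw [← hcast, ← RingCon.coe_mul]
      have h0 : (((wC : R) * (e * z0 * e) - e : R) : M.ringCon.Quotient) = 0 :=
        (quot_eq_zero_iff M _).2 hv2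
      rw [RingCon.coe_sub, sub_eq_zero] at h0
      exact h0
  have hIA : ∀ z : M.ringCon.Quotient, z ≠ 0 →
      ∃ k ∈ idealCl z, ((e : R) : M.ringCon.Quotient) * k * ((e : R) : M.ringCon.Quotient) ≠ 0 := by
    intro z hz
    obtain ⟨z0, rfl⟩ := quot_surj M z
    obtain ⟨N, hNmem⟩ : ∃ N : TwoSidedIdeal R,
        ∀ x, x ∈ N ↔ ((x : R) : M.ringCon.Quotient) ∈ idealCl ((z0 : R) : M.ringCon.Quotient) := by
      refine ⟨TwoSidedIdeal.mk'
        {r : R | ((r : R) : M.ringCon.Quotient) ∈ idealCl ((z0 : R) : M.ringCon.Quotient)}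
        ?_ ?_ ?_ ?_ ?_, fun x => TwoSidedIdeal.mem_mk' ..⟩
      · show ((0 : R) : M.ringCon.Quotient) ∈ idealCl ((z0 : R) : M.ringCon.Quotient)
        rw [RingCon.coe_zero]; exact zero_mem _
      · intro a b ha hb
        show ((a + b : R) : M.ringCon.Quotient) ∈ idealCl ((z0 : R) : M.ringCon.Quotient)
        rw [RingCon.coe_add]; exact add_mem ha hb
      · intro a ha
        show ((-a : R) : M.ringCon.Quotient) ∈ idealCl ((z0 : R) : M.ringCon.Quotient)
        rw [RingCon.coe_neg]; exact neg_mem ha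
      · intro a b hb
        show ((a * b : R) : M.ringCon.Quotient) ∈ idealCl ((z0 : R) : M.ringCon.Quotient)
        rw [RingCon.coe_mul]; exact idealCl_mul_left _ _ hb
      · intro a b ha
        show ((a * b : R) : M.ringCon.Quotient) ∈ idealCl ((z0 : R) : M.ringCon.Quotient)
        rw [RingCon.coe_mul]; exact idealCl_mul_right _ _ ha
    have hMN : M ≤ N := by
      rw [TwoSidedIdeal.le_iff]
      intro r hr
      rw [SetLike.mem_coe, hNmem, (quot_eq_zero_iff M r).2 hr]
      exact zero_mem _
    have hzN : z0 ∈ N := (hNmem z0).2 (idealCl_self _)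
    have hNSnot : N ∉ S := by
      intro hNS
      have hle : N ≤ M := hMmax.2 hNS hMN
      exact hz ((quot_eq_zero_iff M z0).2 (TwoSidedIdeal.le_iff.mp hle hzN))
    have hNSnot' : ¬ ∀ k ∈ N, e * k * e ∈ Jv := hNSnot
    push_neg at hNSnot'
    obtain ⟨k, hkN, hke⟩ := hNSnot'
    refine ⟨((k : R) : M.ringCon.Quotient), (hNmem k).1 hkN, ?_⟩
    intro h0
    have hcast : ((e * k * e : R) : M.ringCon.Quotient)
        = ((e : R) : M.ringCon.Quotient) * ((k : R) : M.ringCon.Quotient)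
          * ((e : R) : M.ringCon.Quotient) := by
      rw [RingCon.coe_mul, RingCon.coe_mul]
    rw [← hcast] at h0
    have hkM : e * k * e ∈ M := (quot_eq_zero_iff M _).1 h0
    have h1 : e * (e * k * e) * e ∈ Jv := hMS _ hkM
    have h2 : e * (e * k * e) * e = e * k * e := by
      simp only [mul_assoc, hee]
      rw [mulc hee]
    rw [h2] at h1
    exact hke h1
  exact hPI.1 M (key_division ((e : R) : M.ringCon.Quotient) heeA hee0
    (quotient_pi2 hPI.2 M) hDA hIA)

end NoDiv

/-- Proposition 5.2 (PiCorners): let `e` be an idempotent in a ring `R`. If `R` is purely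
infinite, then so is the corner `eRe`, and if `R` is properly purely infinite, then so
is `eRe`. -/
theorem corner_purelyInfinite {R : Type*} [NonUnitalRing R]
    (e : R) (he : IsIdempotentElem e) :
    (IsPurelyInfiniteRing R → IsPurelyInfiniteRing (cornerSubring e)) ∧
    (IsProperlyPurelyInfiniteRing R → IsProperlyPurelyInfiniteRing (cornerSubring e)) := by
  have hee : e * e = e := he
  constructor
  · intro hPI
    refine ⟨corner_no_div e he hPI, ?_⟩
    intro a b hab
    obtain ⟨n, x, y, hb⟩ := hab
    have hbR : (b : R) = ∑ i, (x i : R) * (a : R) * (y i : R) := by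
      rw [hb]; push_cast; rfl
    obtain ⟨X, Y, hXY⟩ := hPI.2 (a : R) (b : R) ⟨n, fun i => x i, fun i => y i, hbR⟩
    refine ⟨⟨e * X * e, corner_mem hee X⟩, ⟨e * Y * e, corner_mem hee Y⟩, ?_⟩
    apply Subtype.ext
    show (b : R) = (e * X * e) * (a : R) * (e * Y * e)
    obtain ⟨ha1, ha2⟩ : e * (a : R) = (a : R) ∧ (a : R) * e = (a : R) := a.2
    obtain ⟨hb1, hb2⟩ : e * (b : R) = (b : R) ∧ (b : R) * e = (b : R) := b.2
    calc (b : R) = e * ((b : R) * e) := by rw [hb2, hb1]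
      _ = e * ((X * (a : R) * Y) * e) := by rw [← hXY]
      _ = (e * X * e) * (a : R) * (e * Y * e) := by
          simp only [mul_assoc]
          rw [mulc ha1, mulc ha2]
  · intro hPPI a ha
    have haR : (a : R) ≠ 0 := fun h => ha (Subtype.ext h)
    obtain ⟨-, α, β, hmat⟩ := hPPI (a : R) haR
    refine ⟨ha, ?_⟩
    obtain ⟨ha1, ha2⟩ : e * (a : R) = (a : R) ∧ (a : R) * e = (a : R) := a.2
    have hent : ∀ i j, (!![(a : R), 0; 0, (a : R)]) i j = α i 0 * (a : R) * β 0 j := by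
      intro i j
      rw [hmat, prod_entry]
    have hval : ∀ i j, (e * α i 0 * e) * (a : R) * (e * β 0 j * e)
        = e * ((!![(a : R), 0; 0, (a : R)]) i j) * e := by
      intro i j
      rw [hent i j]
      simp only [mul_assoc]
      rw [mulc ha1, mulc ha2]
    refine ⟨Matrix.of fun i (_ : Fin 1) =>
        (⟨e * α i 0 * e, corner_mem hee _⟩ : cornerSubring e),
      Matrix.of fun (_ : Fin 1) j =>
        (⟨e * β 0 j * e, corner_mem hee _⟩ : cornerSubring e), ?_⟩
    ext i j
    rw [prod_entry]
    have hcoe : ∀ (u v w : cornerSubring e), ((u * v * w : cornerSubring e) : R)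
        = (u : R) * (v : R) * (w : R) := fun u v w => rfl
    rw [hcoe]
    simp only [Matrix.of_apply]
    fin_cases i <;> fin_cases j <;>
      simp only [Matrix.cons_val_zero, Matrix.cons_val_one, Matrix.head_cons,
        Matrix.head_fin_const, Matrix.cons_val_fin_one] <;>
      rw [hval] <;>
      simp [ha1, ha2]
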